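/- arXiv:1601.00296 — 2 statements merged into one kernel-verified Lean document; each statement's English description precedes it below -/
import Mathlib

section
/- Let F be a field of characteristic 2 with more than 2 elements, V a vector space over F, and u a finite-rank endomorphism of V whose trace does not lie in the prime subfield F_2 of F. Then u is not the sum of three idempotent endomorphisms of V. -/
open LinearMap Submodule

section Helpers

variable {F : Type*} [Field F] {V : Type*} [AddCommGroup V] [Module F V]

private theorem stabOf {a : Module.End F V} {X : Submodule F V}
    (hr : LinearMap.range a ≤ X) : ∀ x ∈ X, a x ∈ X :=
  fun x _ => hr (LinearMap.mem_range_self a x)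

/-- Trace of a finite-rank endomorphism computed on a finite-dimensional
subspace containing its range. -/
noncomputable def trOn (a : Module.End F V) (X : Submodule F V)
    (hr : LinearMap.range a ≤ X) : F :=
  LinearMap.trace F X (a.restrict (stabOf hr))

theorem trOn_le {a : Module.End F V} {X Y : Submodule F V}
    [FiniteDimensional F X] [FiniteDimensional F Y]
    (hr : LinearMap.range a ≤ X) (hXY : X ≤ Y) :
    trOn a Y (hr.trans hXY) = trOn a X hr := by
  let c : Y →ₗ[F] X := LinearMap.codRestrict X (a ∘ₗ Y.subtype)
    (fun y => hr ⟨y, rfl⟩)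
  let ι : X →ₗ[F] Y := Submodule.inclusion hXY
  have h1 : a.restrict (stabOf (hr.trans hXY)) = ι ∘ₗ c :=
    LinearMap.ext fun y => Subtype.ext rfl
  have h2 : a.restrict (stabOf hr) = c ∘ₗ ι :=
    LinearMap.ext fun x => Subtype.ext rfl
  rw [trOn, trOn, h1, h2, LinearMap.trace_comp_comm']

theorem trOn_indep {a : Module.End F V} {X Y : Submodule F V}
    [FiniteDimensional F X] [FiniteDimensional F Y]
    (hX : LinearMap.range a ≤ X) (hY : LinearMap.range a ≤ Y) :
    trOn a X hX = trOn a Y hY := by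
  rw [← trOn_le hX (le_sup_left : X ≤ X ⊔ Y), ← trOn_le hY (le_sup_right : Y ≤ X ⊔ Y)]

theorem trOn_add {a b : Module.End F V} {X : Submodule F V}
    [FiniteDimensional F X]
    (ha : LinearMap.range a ≤ X) (hb : LinearMap.range b ≤ X)
    (hab : LinearMap.range (a + b) ≤ X) :
    trOn (a + b) X hab = trOn a X ha + trOn b X hb := by
  have h : (a + b).restrict (stabOf hab)
      = a.restrict (stabOf ha) + b.restrict (stabOf hb) :=
    LinearMap.ext fun x => Subtype.ext rfl
  rw [trOn, h, map_add]; rfl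

theorem trOn_mul_comm {a b : Module.End F V} {X : Submodule F V}
    [FiniteDimensional F X]
    (hsa : ∀ x ∈ X, a x ∈ X) (hsb : ∀ x ∈ X, b x ∈ X)
    (hab : LinearMap.range (a * b) ≤ X) (hba : LinearMap.range (b * a) ≤ X) :
    trOn (a * b) X hab = trOn (b * a) X hba := by
  have h1 : (a * b).restrict (stabOf hab) = a.restrict hsa * b.restrict hsb :=
    LinearMap.ext fun x => Subtype.ext rfl
  have h2 : (b * a).restrict (stabOf hba) = b.restrict hsb * a.restrict hsa :=
    LinearMap.ext fun x => Subtype.ext rfl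
  rw [trOn, trOn, h1, h2, LinearMap.trace_mul_comm]

theorem trOn_congr {a b : Module.End F V} (h : a = b) {X : Submodule F V}
    (ha : LinearMap.range a ≤ X) (hb : LinearMap.range b ≤ X) :
    trOn a X ha = trOn b X hb := by subst h; rfl

theorem range_mul_le_left (a b : Module.End F V) :
    LinearMap.range (a * b) ≤ LinearMap.range a := by
  rintro _ ⟨x, rfl⟩; exact ⟨b x, rfl⟩

end Helpers

section CharTwoTrace

theorem Matrix.trace_mul_self_charTwo {R : Type*} [CommRing R] [CharP R 2]
    {n : Type*} [Fintype n] [DecidableEq n] (M : Matrix n n R) :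
    (M * M).trace = M.trace * M.trace := by
  classical
  have hL : (M * M).trace = ∑ p ∈ Finset.univ ×ˢ Finset.univ, M p.1 p.2 * M p.2 p.1 := by
    rw [Finset.sum_product]
    simp [Matrix.trace, Matrix.diag, Matrix.mul_apply]
  have hR : M.trace * M.trace = ∑ i, M i i * M i i := by
    rw [Matrix.trace]
    simpa [Matrix.diag] using CharTwo.sum_mul_self (Finset.univ) (fun i => M i i)
  rw [hL, hR]
  rw [← Finset.sum_filter_add_sum_filter_not (Finset.univ ×ˢ Finset.univ)
    (fun p => p.1 = p.2) (fun p => M p.1 p.2 * M p.2 p.1)]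
  have hdiag : ∑ p ∈ (Finset.univ ×ˢ Finset.univ).filter (fun p => p.1 = p.2),
      M p.1 p.2 * M p.2 p.1 = ∑ i, M i i * M i i := by
    rw [Finset.sum_filter, Finset.sum_product]
    simp
  have hoff : ∑ p ∈ (Finset.univ ×ˢ Finset.univ).filter (fun p => ¬ p.1 = p.2),
      M p.1 p.2 * M p.2 p.1 = 0 := by
    apply Finset.sum_involution (g := fun p _ => (p.2, p.1))
    · intro p _
      have : M p.1 p.2 * M p.2 p.1 + M p.2 p.1 * M p.1 p.2
          = M p.1 p.2 * M p.2 p.1 + M p.1 p.2 * M p.2 p.1 := by ring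
      rw [this, CharTwo.add_self_eq_zero]
    · intro p hp _ heq
      simp only [Finset.mem_filter, Finset.mem_product, Finset.mem_univ, true_and] at hp
      exact hp (by simpa using congrArg Prod.snd heq)
    · intro p hp
      simp only [Finset.mem_filter, Finset.mem_product, Finset.mem_univ, true_and,
        and_true] at hp ⊢
      exact fun h => hp h.symm
    · intro p _; rfl
  rw [hdiag, hoff, add_zero]

theorem LinearMap.trace_mul_self_charTwo {F : Type*} [Field F] [CharP F 2]
    {W : Type*} [AddCommGroup W] [Module F W] [FiniteDimensional F W]
    (f : Module.End F W) :
    LinearMap.trace F W (f * f) = LinearMap.trace F W f * LinearMap.trace F W f := by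
  classical
  let b := Module.finBasis F W
  rw [LinearMap.trace_eq_matrix_trace F b, LinearMap.trace_eq_matrix_trace F b,
    LinearMap.toMatrix_mul]
  exact Matrix.trace_mul_self_charTwo _

end CharTwoTrace

/-- Over a field of characteristic 2 with more than two elements, a finite-rank
endomorphism whose trace (computed on a finite-dimensional subspace containing
the image) lies outside the prime subfield `{0, 1}` is not the sum of three
idempotent endomorphisms. -/
theorem not_sum_three_idempotents_of_trace_not_in_prime_subfield (F : Type*) [Field F]
    [CharP F 2] (hF : 2 < Cardinal.mk F) (V : Type*) [AddCommGroup V] [Module F V]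
    (u : Module.End F V)
    (W : Submodule F V) (hW : FiniteDimensional F W) (hle : LinearMap.range u ≤ W)
    (hstab : ∀ x ∈ W, u x ∈ W)
    (htr0 : LinearMap.trace F W (u.restrict hstab) ≠ 0)
    (htr1 : LinearMap.trace F W (u.restrict hstab) ≠ 1) :
    ¬ ∃ p q r : Module.End F V,
        p * p = p ∧ q * q = q ∧ r * r = r ∧ u = p + q + r := by
  haveI := hW
  rintro ⟨p, q, r, hp, hq, hr, hu⟩
  -- characteristic-two facts
  have h2E : ∀ x : Module.End F V, x + x = 0 := by
    intro x
    have h2 : (2 : F) = 0 := by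
      have := CharP.cast_eq_zero F 2
      exact_mod_cast this
    calc x + x = (2 : F) • x := (two_smul F x).symm
    _ = 0 := by rw [h2, zero_smul]
  -- p = u + q + r
  have hpu : p = u + q + r := by
    rw [hu]
    have : p + q + r + q + r = p + (q + q) + (r + r) := by abel
    rw [this, h2E q, h2E r, add_zero, add_zero]
  -- the key algebraic identity: qr + rq = u + u² + uq + qu + ur + ru
  have key : q * r + r * q = u + u * u + u * q + q * u + u * r + r * u := by
    have hid : q * r + r * q
        = (u + u * u + u * q + q * u + u * r + r * u)
          + (((p * p - p) - (q * q - q)) - (r * r - r))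
          - (2 * (u * u) + 2 * (u * q) + 2 * (q * u) + 2 * (u * r) + 2 * (r * u)) := by
      rw [hpu]; noncomm_ring
    rw [hp, hq, hr] at hid
    simp only [sub_self, sub_zero, zero_sub, neg_zero, add_zero, zero_add, two_mul,
      h2E] at hid
    exact hid
  set w : Module.End F V := q * r + r * q with hw
  -- q * w + w * q = w
  have keyq : q * w + w * q = w := by
    have hid : q * w + w * q
        = w + ((q * q - q) * r + r * (q * q - q)) + (q * r * q + q * r * q) := by
      rw [hw]; noncomm_ring
    rw [hq] at hid
    simp only [sub_self, zero_mul, mul_zero, add_zero, zero_add, h2E] at hid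
    exact hid
  -- range bounds
  have hWq : FiniteDimensional F (W.map q) := inferInstance
  have hWr : FiniteDimensional F (W.map r) := inferInstance
  set X₂ : Submodule F V := W ⊔ W.map q with hX₂
  set X₃ : Submodule F V := W ⊔ W.map r with hX₃
  set X₁ : Submodule F V := W ⊔ W.map q ⊔ W.map r with hX₁
  haveI : FiniteDimensional F X₂ := inferInstance
  haveI : FiniteDimensional F X₃ := inferInstance
  haveI : FiniteDimensional F X₁ := inferInstance
  have hru : LinearMap.range (u * u) ≤ W := (range_mul_le_left u u).trans hle
  have hruq : LinearMap.range (u * q) ≤ W := (range_mul_le_left u q).trans hle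
  have hrur : LinearMap.range (u * r) ≤ W := (range_mul_le_left u r).trans hle
  have hrqu : LinearMap.range (q * u) ≤ W.map q := by
    rintro _ ⟨x, rfl⟩
    exact ⟨u x, hle ⟨x, rfl⟩, rfl⟩
  have hrru : LinearMap.range (r * u) ≤ W.map r := by
    rintro _ ⟨x, rfl⟩
    exact ⟨u x, hle ⟨x, rfl⟩, rfl⟩
  -- stability of X ⊔ X.map e under idempotent e
  have stab_sup : ∀ (e : Module.End F V), e * e = e → ∀ (X : Submodule F V),
      ∀ x ∈ X ⊔ X.map e, e x ∈ X ⊔ X.map e := by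
    intro e he X x hx
    rcases Submodule.mem_sup.mp hx with ⟨y, hy, z, hz, rfl⟩
    rcases hz with ⟨m, hm, rfl⟩
    have : e (y + e m) = e y + e m := by
      have : e (e m) = e m := by
        have := DFunLike.congr_fun he m
        simpa [Module.End.mul_apply] using this
      simp [map_add, this]
    rw [this]
    exact Submodule.add_mem _ (Submodule.mem_sup_right ⟨y, hy, rfl⟩)
      (Submodule.mem_sup_right ⟨m, hm, rfl⟩)
  -- trace of s₁ := u*q + q*u vanishes
  have hsq2 : ∀ x ∈ X₂, q x ∈ X₂ := stab_sup q hq W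
  have hsu2 : ∀ x ∈ X₂, u x ∈ X₂ := fun x _ => Submodule.mem_sup_left (hle ⟨x, rfl⟩)
  have hruq2 : LinearMap.range (u * q) ≤ X₂ := hruq.trans le_sup_left
  have hrqu2 : LinearMap.range (q * u) ≤ X₂ := hrqu.trans le_sup_right
  have hs₁ : LinearMap.range (u * q + q * u) ≤ X₂ := by
    rintro _ ⟨x, rfl⟩
    exact Submodule.add_mem _ (hruq2 ⟨x, rfl⟩) (hrqu2 ⟨x, rfl⟩)
  have htrs₁ : trOn (u * q + q * u) X₂ hs₁ = 0 := by
    rw [trOn_add hruq2 hrqu2 hs₁, trOn_mul_comm hsu2 hsq2 hruq2 hrqu2,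
      CharTwo.add_self_eq_zero]
  -- trace of s₂ := u*r + r*u vanishes
  have hsr3 : ∀ x ∈ X₃, r x ∈ X₃ := stab_sup r hr W
  have hsu3 : ∀ x ∈ X₃, u x ∈ X₃ := fun x _ => Submodule.mem_sup_left (hle ⟨x, rfl⟩)
  have hrur3 : LinearMap.range (u * r) ≤ X₃ := hrur.trans le_sup_left
  have hrru3 : LinearMap.range (r * u) ≤ X₃ := hrru.trans le_sup_right
  have hs₂ : LinearMap.range (u * r + r * u) ≤ X₃ := by
    rintro _ ⟨x, rfl⟩
    exact Submodule.add_mem _ (hrur3 ⟨x, rfl⟩) (hrru3 ⟨x, rfl⟩)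
  have htrs₂ : trOn (u * r + r * u) X₃ hs₂ = 0 := by
    rw [trOn_add hrur3 hrru3 hs₂, trOn_mul_comm hsu3 hsr3 hrur3 hrru3,
      CharTwo.add_self_eq_zero]
  -- range of w
  have hWX₁ : W ≤ X₁ := le_trans le_sup_left (le_sup_left : W ⊔ W.map q ≤ X₁)
  have hqX₁ : W.map q ≤ X₁ := le_trans le_sup_right (le_sup_left : W ⊔ W.map q ≤ X₁)
  have hrX₁ : W.map r ≤ X₁ := le_sup_right
  have hrw : LinearMap.range w ≤ X₁ := by
    rw [key]
    rintro _ ⟨x, rfl⟩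
    have e1 : u x ∈ X₁ := hWX₁ (hle ⟨x, rfl⟩)
    have e2 : (u * u) x ∈ X₁ := hWX₁ (hru ⟨x, rfl⟩)
    have e3 : (u * q) x ∈ X₁ := hWX₁ (hruq ⟨x, rfl⟩)
    have e4 : (q * u) x ∈ X₁ := hqX₁ (hrqu ⟨x, rfl⟩)
    have e5 : (u * r) x ∈ X₁ := hWX₁ (hrur ⟨x, rfl⟩)
    have e6 : (r * u) x ∈ X₁ := hrX₁ (hrru ⟨x, rfl⟩)
    simp only [LinearMap.add_apply]
    exact Submodule.add_mem _ (Submodule.add_mem _ (Submodule.add_mem _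
      (Submodule.add_mem _ (Submodule.add_mem _ e1 e2) e3) e4) e5) e6
  -- trace of w is zero, via q*w + w*q = w on Y := X₁ ⊔ X₁.map q
  set Y : Submodule F V := X₁ ⊔ X₁.map q with hY
  haveI : FiniteDimensional F Y := inferInstance
  have hsqY : ∀ x ∈ Y, q x ∈ Y := stab_sup q hq X₁
  have hswY : ∀ x ∈ Y, w x ∈ Y := fun x _ => Submodule.mem_sup_left (hrw ⟨x, rfl⟩)
  have hrqw : LinearMap.range (q * w) ≤ Y := by
    rintro _ ⟨x, rfl⟩
    exact Submodule.mem_sup_right ⟨w x, hrw ⟨x, rfl⟩, rfl⟩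
  have hrwq : LinearMap.range (w * q) ≤ Y :=
    ((range_mul_le_left w q).trans hrw).trans le_sup_left
  have hrwY : LinearMap.range w ≤ Y := hrw.trans le_sup_left
  have htrw0 : trOn w Y hrwY = 0 := by
    have h1 : trOn w Y hrwY = trOn (q * w + w * q) Y (by rw [keyq]; exact hrwY) :=
      trOn_congr keyq.symm _ _
    rw [h1, trOn_add hrqw hrwq _, trOn_mul_comm hsqY hswY hrqw hrwq,
      CharTwo.add_self_eq_zero]
  -- now compute trace of w as T + T²
  set T : F := LinearMap.trace F W (u.restrict hstab) with hT
  have hTe : trOn u W hle = T := by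
    rw [trOn, hT]
  have hT2 : trOn (u * u) W hru = T * T := by
    have hres : (u * u).restrict (stabOf hru) = u.restrict hstab * u.restrict hstab :=
      LinearMap.ext fun x => Subtype.ext rfl
    rw [trOn, hres, LinearMap.trace_mul_self_charTwo]
  -- additivity decomposition on X₁
  have hA : LinearMap.range (u + u * u) ≤ W := by
    rintro _ ⟨x, rfl⟩
    exact Submodule.add_mem _ (hle ⟨x, rfl⟩) (hru ⟨x, rfl⟩)
  have hAX : LinearMap.range (u + u * u) ≤ X₁ := hA.trans hWX₁
  have hs₁X : LinearMap.range (u * q + q * u) ≤ X₁ := by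
    rintro _ ⟨x, rfl⟩
    exact Submodule.add_mem _ (hWX₁ (hruq ⟨x, rfl⟩)) (hqX₁ (hrqu ⟨x, rfl⟩))
  have hs₂X : LinearMap.range (u * r + r * u) ≤ X₁ := by
    rintro _ ⟨x, rfl⟩
    exact Submodule.add_mem _ (hWX₁ (hrur ⟨x, rfl⟩)) (hrX₁ (hrru ⟨x, rfl⟩))
  have hsum12 : LinearMap.range ((u + u * u) + (u * q + q * u)) ≤ X₁ := by
    rintro _ ⟨x, rfl⟩
    exact Submodule.add_mem _ (hAX ⟨x, rfl⟩) (hs₁X ⟨x, rfl⟩)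
  have hwX₁eq : w = ((u + u * u) + (u * q + q * u)) + (u * r + r * u) := by
    rw [key]; abel
  have hfin : trOn w X₁ hrw = T + T * T := by
    have h1 : trOn w X₁ hrw
        = trOn (((u + u * u) + (u * q + q * u)) + (u * r + r * u)) X₁
            (by rw [← hwX₁eq]; exact hrw) :=
      trOn_congr hwX₁eq _ _
    rw [h1, trOn_add hsum12 hs₂X _, trOn_add hAX hs₁X _]
    rw [trOn_indep hs₁X hs₁, htrs₁, trOn_indep hs₂X hs₂, htrs₂, add_zero, add_zero]
    rw [trOn_indep hAX hA, trOn_add hle hru hA, hTe, hT2]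
  have : T + T * T = 0 := by
    rw [← hfin, trOn_indep hrw hrwY, htrw0]
  -- conclude T ∈ {0, 1}
  have h2F : (2 : F) = 0 := CharTwo.two_eq_zero
  have hTT : T * T = T := by linear_combination this - T * h2F
  have hfact : T * (T - 1) = 0 := by linear_combination hTT
  rcases mul_eq_zero.mp hfact with h | h
  · exact htr0 h
  · exact htr1 (sub_eq_zero.mp h)
end

section
/- Let V be a vector space over a field and let u be a rank-one idempotent endomorphism of V. Then u is not the sum of three square-zero endomorphisms of V. -/
/-- A rank-one idempotent endomorphism of a vector space is not the sum of
three square-zero endomorphisms. -/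
theorem rank_one_idempotent_not_sum_three_square_zero (F : Type*) [Field F]
    (V : Type*) [AddCommGroup V] [Module F V] (u : Module.End F V)
    (hidem : u * u = u) (hrank : Module.rank F (LinearMap.range u) = 1) :
    ¬ ∃ a b c : Module.End F V,
        a * a = 0 ∧ b * b = 0 ∧ c * c = 0 ∧ u = a + b + c := by
  rintro ⟨a, b, c, ha, hb, hc, habc⟩
  -- pointwise square-zero facts
  have haa : ∀ x, a (a x) = 0 := fun x => by
    have := DFunLike.congr_fun ha x; simpa [Module.End.mul_apply] using this
  have hbb : ∀ x, b (b x) = 0 := fun x => by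
    have := DFunLike.congr_fun hb x; simpa [Module.End.mul_apply] using this
  -- pick a spanning vector of the range
  obtain ⟨e₀, he₀ne, hspan₀⟩ := rank_eq_one_iff.mp hrank
  set e : V := (e₀ : V) with he_def
  have he_ne : e ≠ 0 := fun h => he₀ne (Subtype.ext h)
  have he_mem : e ∈ LinearMap.range u := e₀.2
  have hue : u e = e := by
    obtain ⟨y, hy⟩ := he_mem
    have := DFunLike.congr_fun hidem y
    simp only [Module.End.mul_apply] at this
    rw [hy] at this
    exact this
  have hspan : ∀ x : V, ∃ s : F, u x = s • e := by
    intro x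
    obtain ⟨s, hs⟩ := hspan₀ ⟨u x, ⟨x, rfl⟩⟩
    exact ⟨s, by simpa [he_def] using congrArg Subtype.val hs.symm⟩
  -- operator identity (a+b)^2 = u(a+b) + (a+b)u - u
  have hcd : c = u - a - b := by rw [habc]; abel
  have h := hc
  rw [hcd] at h
  have key : (a + b) * (a + b) = u * (a + b) + (a + b) * u - u := by
    have expand : (u - a - b) * (u - a - b)
        = u * u - u * a - u * b - a * u + a * a + a * b - b * u + b * a + b * b := by
      noncomm_ring
    rw [expand, hidem, ha, hb] at h
    have h3 : (a + b) * (a + b) - (u * (a + b) + (a + b) * u - u)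
        = (u - u * a - u * b - a * u + 0 + a * b - b * u + b * a + 0) + (a * a + b * b) := by
      noncomm_ring
    rw [h, ha, hb] at h3
    simp only [zero_add, add_zero] at h3
    exact sub_eq_zero.mp h3
  -- pointwise version: (a+b)((a+b)x) lies in span {e, (a+b)e}
  have hn : ∀ x : V, ∃ r s : F,
      (a + b) ((a + b) x) = r • e + s • ((a + b) e) := by
    intro x
    have hx := DFunLike.congr_fun key x
    simp only [Module.End.mul_apply, LinearMap.add_apply, LinearMap.sub_apply] at hx
    obtain ⟨s₁, hs₁⟩ := hspan (a x + b x)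
    obtain ⟨s₂, hs₂⟩ := hspan x
    refine ⟨s₁ - s₂, s₂, ?_⟩
    simp only [LinearMap.add_apply] at hx ⊢
    rw [hx, hs₁, hs₂, map_smul a, map_smul b]
    module
  classical
  set S : Set V := {e, a e, b e, a (b e), b (a e)} with hS
  set W : Submodule F V := Submodule.span F S with hW
  have hmem : ∀ v ∈ S, v ∈ W := fun v hv => Submodule.subset_span hv
  have heW : e ∈ W := hmem _ (by simp [hS])
  have haeW : a e ∈ W := hmem _ (by simp [hS])
  have hbeW : b e ∈ W := hmem _ (by simp [hS])
  have habeW : a (b e) ∈ W := hmem _ (by simp [hS])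
  have hbaeW : b (a e) ∈ W := hmem _ (by simp [hS])
  have huW : ∀ x : V, u x ∈ W := by
    intro x
    obtain ⟨s, hs⟩ := hspan x
    rw [hs]; exact W.smul_mem _ heW
  -- W is invariant under a
  have haW : ∀ x ∈ W, a x ∈ W := by
    intro x hx
    have : W ≤ W.comap a := by
      rw [hW, Submodule.span_le]
      rintro v (rfl | rfl | rfl | rfl | rfl) <;> simp only [SetLike.mem_coe, Submodule.mem_comap]
      · exact haeW
      · rw [haa]; exact W.zero_mem
      · exact habeW
      · rw [haa]; exact W.zero_mem
      · -- a (b (a e)) = (a+b)((a+b)(a e))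
        obtain ⟨r, s, hrs⟩ := hn (a e)
        have : a (b (a e)) = r • e + s • ((a + b) e) := by
          simpa [LinearMap.add_apply, haa, hbb] using hrs
        rw [this]
        exact W.add_mem (W.smul_mem _ heW)
          (W.smul_mem _ (by simpa using W.add_mem haeW hbeW))
    exact this hx
  have hbW : ∀ x ∈ W, b x ∈ W := by
    intro x hx
    have : W ≤ W.comap b := by
      rw [hW, Submodule.span_le]
      rintro v (rfl | rfl | rfl | rfl | rfl) <;> simp only [SetLike.mem_coe, Submodule.mem_comap]
      · exact hbeW
      · exact hbaeW
      · rw [hbb]; exact W.zero_mem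
      · -- b (a (b e)) = (a+b)((a+b)(b e))
        obtain ⟨r, s, hrs⟩ := hn (b e)
        have : b (a (b e)) = r • e + s • ((a + b) e) := by
          simpa [LinearMap.add_apply, haa, hbb] using hrs
        rw [this]
        exact W.add_mem (W.smul_mem _ heW)
          (W.smul_mem _ (by simpa using W.add_mem haeW hbeW))
      · rw [hbb]; exact W.zero_mem
    exact this hx
  have hcW : ∀ x ∈ W, c x ∈ W := by
    intro x hx
    have : c x = u x - a x - b x := by rw [hcd]; simp
    rw [this]
    exact W.sub_mem (W.sub_mem (huW x) (haW x hx)) (hbW x hx)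
  have huW' : ∀ x ∈ W, u x ∈ W := fun x _ => huW x
  haveI : FiniteDimensional F W := FiniteDimensional.span_of_finite F (Set.toFinite S)
  -- restrictions
  set A := a.restrict haW with hA
  set B := b.restrict hbW with hB
  set C := c.restrict hcW with hC
  set U := u.restrict huW' with hU
  have hAnil : IsNilpotent A := by
    refine ⟨2, ?_⟩
    ext x
    simp [pow_succ, pow_zero, Module.End.mul_apply, hA, LinearMap.restrict_apply, haa]
  have hBnil : IsNilpotent B := by
    refine ⟨2, ?_⟩
    ext x
    simp [pow_succ, pow_zero, Module.End.mul_apply, hB, LinearMap.restrict_apply, hbb]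
  have hcc : ∀ x, c (c x) = 0 := fun x => by
    have := DFunLike.congr_fun hc x; simpa [Module.End.mul_apply] using this
  have hCnil : IsNilpotent C := by
    refine ⟨2, ?_⟩
    ext x
    simp [pow_succ, pow_zero, Module.End.mul_apply, hC, LinearMap.restrict_apply, hcc]
  have htrA : LinearMap.trace F W A = 0 :=
    (LinearMap.isNilpotent_trace_of_isNilpotent hAnil).eq_zero
  have htrB : LinearMap.trace F W B = 0 :=
    (LinearMap.isNilpotent_trace_of_isNilpotent hBnil).eq_zero
  have htrC : LinearMap.trace F W C = 0 :=
    (LinearMap.isNilpotent_trace_of_isNilpotent hCnil).eq_zero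
  have hUsum : U = A + B + C := by
    ext x
    have := DFunLike.congr_fun habc (x : V)
    simp only [LinearMap.add_apply] at this
    simp [hU, hA, hB, hC, LinearMap.restrict_apply, this]
  have htrU0 : LinearMap.trace F W U = 0 := by
    rw [hUsum, map_add, map_add, htrA, htrB, htrC]; ring
  -- U is a projection onto the line spanned by e
  set eW : W := ⟨e, heW⟩ with heWdef
  have heWne : eW ≠ 0 := fun h => he_ne (congrArg Subtype.val h)
  have hproj : LinearMap.IsProj (F ∙ eW) U := by
    constructor
    · intro x
      obtain ⟨s, hs⟩ := hspan (x : V)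
      have : U x = s • eW := Subtype.ext (by simp [hU, LinearMap.restrict_apply, hs, heWdef])
      rw [this]
      exact Submodule.smul_mem _ _ (Submodule.mem_span_singleton_self eW)
    · intro x hx
      obtain ⟨r, hr⟩ := Submodule.mem_span_singleton.mp hx
      have hUe : U eW = eW := Subtype.ext (by simp [hU, LinearMap.restrict_apply, heWdef, hue])
      rw [← hr, map_smul, hUe]
  have htrU1 : LinearMap.trace F W U = (Module.finrank F (F ∙ eW) : F) := hproj.trace
  rw [finrank_span_singleton heWne, htrU0] at htrU1
  norm_num at htrU1
end
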